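/- Let g : ℂ → [0,∞) be measurable, δ > 0, λ > 0, and suppose c(λ) := ∫ 1_{|x|≤δ} g(x)^{−λ} dℓ_ℂ(x) < ∞. Then for every ε > 0 and every n ∈ ℕ, ∫_{ℂ^{n+1}} 1{∏_{k=0}^n g(a_k) ≤ e^{−εn²}} · 1{max_{0≤k≤n} |a_k| < δ} dℓ_{ℂ^{n+1}}(a_0,…,a_n) ≤ e^{−λεn²} · c(λ)^{n+1}. -/

import Mathlib

open MeasureTheory Filter
open scoped ENNReal

lemma lintegral_pi_prod_aux (h : ℂ → ℝ≥0∞) (hh : Measurable h) :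
    ∀ n : ℕ, ∫⁻ a : Fin n → ℂ, ∏ k, h (a k) = (∫⁻ x, h x) ^ n := by
  intro n
  induction n with
  | zero => simp [MeasureTheory.volume_pi, Measure.pi_univ]
  | succ m ih =>
    have hmp := (MeasureTheory.volume_preserving_piFinSuccAbove (fun _ : Fin (m+1) => ℂ) 0).symm
    rw [hmp.lintegral_map_equiv (fun a => ∏ k, h (a k))]
    have heq : ∀ p : ℂ × (Fin m → ℂ),
        (∏ k, h (((MeasurableEquiv.piFinSuccAbove (fun _ : Fin (m+1) => ℂ) 0).symm p) k)) =
        h p.1 * ∏ j, h (p.2 j) := by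
      intro p
      rw [Fin.prod_univ_succ]
      simp [MeasurableEquiv.piFinSuccAbove, Fin.insertNthEquiv]
    simp only [heq]
    have hg : Measurable (fun b : Fin m → ℂ => ∏ j, h (b j)) :=
      Finset.measurable_prod _ fun j _ => hh.comp (measurable_pi_apply j)
    rw [Measure.volume_eq_prod, lintegral_prod_mul hh.aemeasurable hg.aemeasurable, ih]
    ring

set_option maxHeartbeats 1000000 in
/-- Chernoff-type bound: if `c(λ) = ∫_{|x|≤δ} g(x)^{−λ} dℓ_ℂ(x) < ∞` for a fixed `λ > 0`,
then for every `ε > 0` and every `n`, the Lebesgue measure of the set of coefficient vectors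
`a ∈ ℂ^{n+1}` with `∏_k g(a_k) ≤ e^{−εn²}` and `max_k |a_k| < δ` is at most
`e^{−λεn²} c(λ)^{n+1}`. -/
theorem chernoff_bound_complex (g : ℂ → ℝ) (hg_meas : Measurable g)
    (hg_nonneg : ∀ x, 0 ≤ g x) (δ l : ℝ) (hδ : 0 < δ) (hl : 0 < l)
    (hc : ∫⁻ x in {x : ℂ | ‖x‖ ≤ δ}, ENNReal.ofReal (g x) ^ (-l) < ⊤) :
    ∀ ε > (0 : ℝ), ∀ n : ℕ,
      volume {a : Fin (n + 1) → ℂ |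
          (∏ k, g (a k)) ≤ Real.exp (-ε * (n : ℝ) ^ 2) ∧ ∀ k, ‖a k‖ < δ}
        ≤ ENNReal.ofReal (Real.exp (-l * ε * (n : ℝ) ^ 2)) *
            (∫⁻ x in {x : ℂ | ‖x‖ ≤ δ}, ENNReal.ofReal (g x) ^ (-l)) ^ (n + 1) := by
  intro ε hε n
  set D : Set ℂ := {x : ℂ | ‖x‖ ≤ δ} with hD
  have hDmeas : MeasurableSet D := by
    have : D = (fun x : ℂ => ‖x‖) ⁻¹' (Set.Iic δ) := rfl
    rw [this]; exact continuous_norm.measurable measurableSet_Iic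
  set h : ℂ → ℝ≥0∞ := D.indicator (fun x => ENNReal.ofReal (g x) ^ (-l)) with hhdef
  have hh : Measurable h :=
    ((hg_meas.ennreal_ofReal).pow_const _).indicator hDmeas
  have hint : ∫⁻ x, h x = ∫⁻ x in D, ENNReal.ofReal (g x) ^ (-l) := by
    rw [hhdef, lintegral_indicator hDmeas]
  set S : Set (Fin (n+1) → ℂ) := {a : Fin (n + 1) → ℂ |
      (∏ k, g (a k)) ≤ Real.exp (-ε * (n : ℝ) ^ 2) ∧ ∀ k, ‖a k‖ < δ} with hS
  have hSmeas : MeasurableSet S := by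
    apply MeasurableSet.inter
    · exact measurableSet_le (Finset.measurable_prod _ fun k _ =>
        hg_meas.comp (measurable_pi_apply k)) measurable_const
    · show MeasurableSet {a : Fin (n+1) → ℂ | ∀ k, ‖a k‖ < δ}
      rw [Set.setOf_forall]
      exact MeasurableSet.iInter fun k =>
        measurableSet_lt (continuous_norm.measurable.comp (measurable_pi_apply k))
          measurable_const
  -- pointwise bound
  have key : ∀ a : Fin (n+1) → ℂ, S.indicator (fun _ => (1:ℝ≥0∞)) a ≤
      ENNReal.ofReal (Real.exp (-l * ε * (n : ℝ) ^ 2)) * ∏ k, h (a k) := by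
    intro a
    rcases Classical.em (a ∈ S) with haS | haS
    · rw [Set.indicator_of_mem haS]
      obtain ⟨h1, h2⟩ := haS
      have hma : ∀ k, h (a k) = ENNReal.ofReal (g (a k)) ^ (-l) := fun k =>
        Set.indicator_of_mem (show a k ∈ D from (h2 k).le) _
      have hprod : (∏ k, h (a k)) = (∏ k, ENNReal.ofReal (g (a k))) ^ (-l) := by
        simp_rw [hma]
        rw [ENNReal.prod_rpow_of_ne_top (fun i _ => ENNReal.ofReal_ne_top)]
      have hle : (∏ k, ENNReal.ofReal (g (a k))) ≤
          ENNReal.ofReal (Real.exp (-ε * (n : ℝ) ^ 2)) := by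
        rw [← ENNReal.ofReal_prod_of_nonneg (fun i _ => hg_nonneg _)]
        exact ENNReal.ofReal_le_ofReal h1
      have hmono : ENNReal.ofReal (Real.exp (-ε * (n : ℝ) ^ 2)) ^ (-l) ≤
          (∏ k, ENNReal.ofReal (g (a k))) ^ (-l) := by
        rw [ENNReal.rpow_neg, ENNReal.rpow_neg]
        exact ENNReal.inv_le_inv.mpr (ENNReal.rpow_le_rpow hle hl.le)
      have hexp : ENNReal.ofReal (Real.exp (-ε * (n : ℝ) ^ 2)) ^ (-l) =
          ENNReal.ofReal (Real.exp (l * ε * (n : ℝ) ^ 2)) := by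
        rw [ENNReal.ofReal_rpow_of_pos (Real.exp_pos _), ← Real.exp_mul]
        ring_nf
      calc (1:ℝ≥0∞) = ENNReal.ofReal (Real.exp (-l * ε * (n : ℝ) ^ 2)) *
            ENNReal.ofReal (Real.exp (l * ε * (n : ℝ) ^ 2)) := by
            rw [← ENNReal.ofReal_mul (Real.exp_pos _).le, ← Real.exp_add]
            norm_num
        _ ≤ ENNReal.ofReal (Real.exp (-l * ε * (n : ℝ) ^ 2)) * ∏ k, h (a k) := by
            apply mul_le_mul_right
            rw [hprod, ← hexp]
            exact hmono
    · rw [Set.indicator_of_notMem haS]; exact zero_le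
  have step1 : volume S = ∫⁻ a, S.indicator (fun _ => (1:ℝ≥0∞)) a := by
        rw [lintegral_indicator hSmeas]; simp
  have step2 : (∫⁻ a, S.indicator (fun _ => (1:ℝ≥0∞)) a) ≤
      ∫⁻ a : Fin (n+1) → ℂ, ENNReal.ofReal (Real.exp (-l * ε * (n : ℝ) ^ 2)) * ∏ k, h (a k) :=
    lintegral_mono key
  have step3 : (∫⁻ a : Fin (n+1) → ℂ, ENNReal.ofReal (Real.exp (-l * ε * (n : ℝ) ^ 2)) * ∏ k, h (a k))
      = ENNReal.ofReal (Real.exp (-l * ε * (n : ℝ) ^ 2)) *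
        (∫⁻ x in {x : ℂ | ‖x‖ ≤ δ}, ENNReal.ofReal (g x) ^ (-l)) ^ (n + 1) := by
    have hmp : Measurable (fun a : Fin (n+1) → ℂ => ∏ k, h (a k)) :=
      Finset.measurable_prod _ fun k _ => hh.comp (measurable_pi_apply k)
    rw [lintegral_const_mul _ hmp, lintegral_pi_prod_aux h hh (n+1), hint]
  exact le_of_le_of_eq (le_of_eq_of_le step1 step2) step3
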